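/- An uncountable-dimensional Polish vector space over ℚ does not have an analytic basis: if V is a Polish topological vector space over ℚ (with the discrete topology on ℚ) and B ⊆ V is an analytic Hamel basis of V over ℚ, then B is countable. -/

import Mathlib

open MeasureTheory Set Filter Topology

section Aux

variable {V : Type*} [AddCommGroup V] [Module ℚ V] [TopologicalSpace V]
    [IsTopologicalAddGroup V] [PolishSpace V]

/-- Intersection of two analytic sets is analytic. -/
lemma aux_analyticSet_inter {s t : Set V} (hs : AnalyticSet s) (ht : AnalyticSet t) :
    AnalyticSet (s ∩ t) := by
  rw [Set.inter_eq_iInter]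
  exact AnalyticSet.iInter (fun b => by cases b <;> simpa)

/-- The span of an analytic set in a Polish ℚ-vector space is analytic. -/
lemma aux_span_analytic (hsmul : ∀ q : ℚ, Continuous fun v : V => q • v)
    {A : Set V} (hA : AnalyticSet A) :
    AnalyticSet (↑(Submodule.span ℚ A) : Set V) := by
  obtain ⟨β, hβt, hβp, f, hf, rfl⟩ := analyticSet_iff_exists_polishSpace_range.mp hA
  have key : (↑(Submodule.span ℚ (Set.range f)) : Set V)
      = ⋃ (n : ℕ), ⋃ (q : Fin n → ℚ),
          Set.range (fun x : Fin n → β => ∑ i, q i • f (x i)) := by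
    apply subset_antisymm
    · intro v hv
      rw [SetLike.mem_coe] at hv
      induction hv using Submodule.span_induction with
      | mem a ha =>
        obtain ⟨y, rfl⟩ := ha
        refine mem_iUnion.2 ⟨1, mem_iUnion.2 ⟨fun _ => 1, ⟨fun _ => y, ?_⟩⟩⟩
        simp
      | zero =>
        refine mem_iUnion.2 ⟨0, mem_iUnion.2 ⟨fun i => i.elim0, ⟨fun i => i.elim0, ?_⟩⟩⟩
        simp
      | add x y hx hy ihx ihy =>
        simp only [mem_iUnion, mem_range] at ihx ihy ⊢
        obtain ⟨m, q, a, rfl⟩ := ihx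
        obtain ⟨n, r, c, rfl⟩ := ihy
        refine ⟨m + n, Fin.append q r, Fin.append a c, ?_⟩
        rw [Fin.sum_univ_add]
        simp [Fin.append_left, Fin.append_right]
      | smul t x hx ih =>
        simp only [mem_iUnion, mem_range] at ih ⊢
        obtain ⟨n, q, a, rfl⟩ := ih
        refine ⟨n, fun i => t * q i, a, ?_⟩
        rw [Finset.smul_sum]
        simp [smul_smul]
    · refine iUnion_subset fun n => iUnion_subset fun q => ?_
      rintro v ⟨x, rfl⟩
      exact Submodule.sum_mem _ fun i _ =>
        Submodule.smul_mem _ _ (Submodule.subset_span ⟨x i, rfl⟩)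
  rw [key]
  refine AnalyticSet.iUnion fun n => AnalyticSet.iUnion fun q =>
    analyticSet_range_of_polishSpace ?_
  exact continuous_finset_sum _ fun i _ => (hsmul (q i)).comp (hf.comp (continuous_apply i))

/-- A nonempty open set is not meager in a Baire space. -/
lemma aux_not_isMeagre_of_isOpen [BaireSpace V] {U : Set V} (hU : IsOpen U)
    (hne : U.Nonempty) : ¬ IsMeagre U := by
  intro hm
  obtain ⟨p, hp1, hp2⟩ := (dense_of_mem_residual hm).inter_open_nonempty _ hU hne
  exact hp2 hp1

end Aux

theorem stmt_2 (V : Type*) [AddCommGroup V] [Module ℚ V] [TopologicalSpace V]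
    [IsTopologicalAddGroup V] [PolishSpace V]
    (hsmul : ∀ q : ℚ, Continuous fun v : V => q • v)
    (B : Set V) (hB : MeasureTheory.AnalyticSet B)
    (hind : LinearIndependent ℚ ((↑) : B → V))
    (hspan : Submodule.span ℚ B = ⊤) :
    B.Countable := by
  classical
  letI : MeasurableSpace V := borel V
  haveI : BorelSpace V := ⟨rfl⟩
  haveI : Nonempty V := ⟨0⟩
  haveI : BaireSpace V := by
    letI := TopologicalSpace.upgradeIsCompletelyMetrizable V
    infer_instance
  obtain ⟨D, hDc, hDd⟩ := TopologicalSpace.exists_countable_dense V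
  have hmem : ∀ d : V, d ∈ Submodule.span ℚ B := fun d => hspan ▸ Submodule.mem_top
  choose c hcsupp hcsum using fun d => Submodule.mem_span_set.mp (hmem d)
  set B₀ : Set V := ⋃ d ∈ D, ((c d).support : Set V) with hB₀
  have hB₀c : B₀.Countable := hDc.biUnion fun d _ => (c d).support.countable_toSet
  suffices hBB₀ : B ⊆ B₀ from hB₀c.mono hBB₀
  intro b hbB
  by_contra hbB₀
  set A : Set V := B \ {b} with hAdef
  have hB₀A : B₀ ⊆ A := fun v hv =>
    ⟨(iUnion₂_subset fun d _ => hcsupp d) hv, fun h => hbB₀ (h ▸ hv)⟩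
  set K := Submodule.span ℚ A with hKdef
  -- b is not in the span of the other basis vectors
  have hbK : b ∉ K := by
    have himg : ((↑) : B → V) '' {y : B | (y : V) ≠ b} = A := by
      ext v
      constructor
      · rintro ⟨⟨w, hw⟩, hne, rfl⟩
        exact ⟨hw, hne⟩
      · rintro ⟨hvB, hvb⟩
        exact ⟨⟨v, hvB⟩, hvb, rfl⟩
    have := hind.notMem_span_image (s := {y : B | (y : V) ≠ b}) (x := (⟨b, hbB⟩ : B))
      (by simp)
    rwa [himg] at this
  have hAan : AnalyticSet A := by
    have : A = B ∩ {b}ᶜ := by rw [hAdef, diff_eq]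
    rw [this]
    exact aux_analyticSet_inter hB ((measurableSet_singleton b).compl.analyticSet)
  have hKan : AnalyticSet (↑K : Set V) := aux_span_analytic hsmul hAan
  have hBA : insert b A = B := by
    rw [hAdef, Set.insert_diff_singleton, Set.insert_eq_of_mem hbB]
  have hrep : ∀ v : V, ∃ q : ℚ, ∃ z ∈ K, v = q • b + z := by
    intro v
    have hv : v ∈ Submodule.span ℚ (insert b A) := by
      rw [hBA, hspan]; exact Submodule.mem_top
    obtain ⟨a, z, hz, hva⟩ := Submodule.mem_span_insert.mp hv
    exact ⟨a, z, hz, hva⟩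
  have hcoset : ∀ q : ℚ, q ≠ 0 → ∀ z ∈ K, q • b + z ∉ K := by
    intro q hq z hz hmem'
    have h1 : q • b ∈ K := by
      have := K.sub_mem hmem' hz
      simpa using this
    have h2 : b ∈ K := by
      have := K.smul_mem q⁻¹ h1
      rwa [smul_smul, inv_mul_cancel₀ hq, one_smul] at this
    exact hbK h2
  have hKcompl : (↑K : Set V)ᶜ
      = ⋃ q : {q : ℚ // q ≠ 0}, (fun y => (q : ℚ) • b + y) '' (↑K : Set V) := by
    ext v
    simp only [mem_compl_iff, mem_iUnion, mem_image, SetLike.mem_coe]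
    constructor
    · intro hv
      obtain ⟨q, z, hz, rfl⟩ := hrep v
      have hq : q ≠ 0 := by
        rintro rfl
        exact hv (by simpa using hz)
      exact ⟨⟨q, hq⟩, z, hz, rfl⟩
    · rintro ⟨⟨q, hq⟩, z, hz, rfl⟩
      exact hcoset q hq z hz
  -- translation of a meager set is meager
  have himgpre : ∀ (t : V) (S : Set V), (fun y => t + y) '' S = (fun y => -t + y) ⁻¹' S := by
    intro t S
    ext v
    constructor
    · rintro ⟨y, hy, rfl⟩
      simpa [Set.mem_preimage, neg_add_cancel_left] using hy
    · intro h
      exact ⟨-t + v, h, by simp⟩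
  have hmeagre_trans : ∀ (t : V), IsMeagre (↑K : Set V) →
      IsMeagre ((fun y => t + y) '' (↑K : Set V)) := by
    intro t hm
    rw [himgpre]
    exact hm.preimage_of_isOpenMap (continuous_add_left (-t)) (isOpenMap_add_left (-t))
  -- K is not meager
  have hKnm : ¬ IsMeagre (↑K : Set V) := by
    intro hm
    have h2 : IsMeagre ((↑K : Set V)ᶜ) := by
      rw [hKcompl]
      show (⋃ q : {q : ℚ // q ≠ 0}, (fun y => (q : ℚ) • b + y) '' (↑K : Set V))ᶜ ∈ residual V
      rw [Set.compl_iUnion]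
      exact countable_iInter_mem.mpr fun q => hmeagre_trans _ hm
    have hmU : IsMeagre (Set.univ : Set V) := by
      have huniv : (Set.univ : Set V) = ↑K ∪ (↑K)ᶜ := by simp
      rw [huniv]
      show (↑K ∪ (↑K : Set V)ᶜ)ᶜ ∈ residual V
      rw [Set.compl_union]
      exact Filter.inter_mem hm h2
    exact aux_not_isMeagre_of_isOpen isOpen_univ ⟨0, trivial⟩ hmU
  -- K has the Baire property (via Suslin's theorem)
  have hKbm : BaireMeasurableSet (↑K : Set V) := by
    have hKcan : AnalyticSet ((↑K : Set V)ᶜ) := by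
      rw [hKcompl]
      exact AnalyticSet.iUnion fun q =>
        hKan.image_of_continuous (continuous_const.add continuous_id)
    exact (hKan.measurableSet_of_compl hKcan).baireMeasurableSet
  obtain ⟨U, hUo, hKU⟩ := hKbm.residualEq_isOpen
  have hUne : U.Nonempty := by
    rcases U.eq_empty_or_nonempty with rfl | h
    · exfalso
      apply hKnm
      show (↑K : Set V)ᶜ ∈ residual V
      filter_upwards [Filter.eventuallyEq_set.mp hKU] with x hx
      intro hxK
      exact Set.notMem_empty x (hx.mp hxK)
    · exact h
  obtain ⟨u, huU⟩ := hUne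
  -- Pettis-type argument: differences of elements of U lie in K
  have hdiff : ∀ x ∈ U, ∀ y ∈ U, x - y ∈ K := by
    intro x hx y hy
    set τ : V → V := fun w => -(x - y) + w with hτdef
    have hτc : Continuous τ := continuous_add_left _
    have hτo : IsOpenMap τ := isOpenMap_add_left _
    have hτt : Filter.Tendsto τ (residual V) (residual V) :=
      tendsto_residual_of_isOpenMap hτc hτo
    have h1 : ∀ᶠ v in residual V,
        v ∈ ((↑K : Set V) ∩ τ ⁻¹' ↑K) ↔ v ∈ (U ∩ τ ⁻¹' U) :=
      Filter.eventuallyEq_set.mp (hKU.inter (hKU.comp_tendsto hτt))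
    have hxmem : x ∈ U ∩ τ ⁻¹' U := by
      refine ⟨hx, ?_⟩
      show -(x - y) + x ∈ U
      have : -(x - y) + x = y := by abel
      rw [this]; exact hy
    have hopen2 : IsOpen (U ∩ τ ⁻¹' U) := hUo.inter (hUo.preimage hτc)
    rcases ((↑K : Set V) ∩ τ ⁻¹' ↑K).eq_empty_or_nonempty with hemp | ⟨w, hwK, hwK2⟩
    · exfalso
      apply aux_not_isMeagre_of_isOpen hopen2 ⟨x, hxmem⟩
      show (U ∩ τ ⁻¹' U)ᶜ ∈ residual V
      filter_upwards [h1] with v hv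
      intro hvmem
      have hv2 : v ∈ (↑K : Set V) ∩ τ ⁻¹' ↑K := hv.mpr hvmem
      rw [hemp] at hv2
      exact Set.notMem_empty v hv2
    · have hwK2' : -(x - y) + w ∈ K := hwK2
      have : w - (-(x - y) + w) ∈ K := K.sub_mem hwK hwK2'
      have heq : w - (-(x - y) + w) = x - y := by abel
      rwa [heq] at this
  -- endgame: an open set around b meets the dense set D ⊆ span B₀ ⊆ K
  have hO : IsOpen ((fun w => (b - u) + w) '' U) := isOpenMap_add_left (b - u) U hUo
  have hbO : b ∈ (fun w => (b - u) + w) '' U := ⟨u, huU, by simp⟩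
  obtain ⟨d, hdO, hdD⟩ := hDd.inter_open_nonempty _ hO ⟨b, hbO⟩
  obtain ⟨u', hu'U, hdu⟩ := hdO
  have hdK : d ∈ K := by
    refine Submodule.mem_span_set.mpr ⟨c d, ?_, hcsum d⟩
    exact fun v hv => hB₀A (Set.mem_biUnion hdD hv)
  have hbK' : b ∈ K := by
    have h1 : u' - u ∈ K := hdiff u' hu'U u huU
    have hbeq : b = d - (u' - u) := by
      rw [← hdu]
      show b = (b - u + u') - (u' - u)
      abel
    rw [hbeq]
    exact K.sub_mem hdK h1
  exact hbK hbK'
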